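/- For all t ≥ 0, erf(t) ≤ √(1 − exp(−4t²/π)). -/

import Mathlib

open Real

noncomputable def erf (t : ℝ) : ℝ := (2 / Real.sqrt π) * ∫ z in (0:ℝ)..t, Real.exp (-z^2)

open MeasureTheory Set

namespace ErfAux

/-- quarter disk -/
def D (R : ℝ) : Set (ℝ × ℝ) := {p | 0 < p.1 ∧ 0 < p.2 ∧ p.1^2 + p.2^2 < R^2}

lemma measurableSet_D (R : ℝ) : MeasurableSet (D R) := by
  have h1 : MeasurableSet {p : ℝ × ℝ | 0 < p.1} := measurableSet_lt measurable_const measurable_fst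
  have h2 : MeasurableSet {p : ℝ × ℝ | 0 < p.2} := measurableSet_lt measurable_const measurable_snd
  have h3 : MeasurableSet {p : ℝ × ℝ | p.1^2 + p.2^2 < R^2} :=
    measurableSet_lt (by fun_prop) measurable_const
  exact (h1.inter (h2.inter h3)).congr (by ext p; simp [D, mem_setOf_eq, and_assoc])

lemma polar_comp (R : ℝ) (hR : 0 < R) (g : ℝ → ℝ) :
    ∫ p : ℝ × ℝ, (D R).indicator (fun q => g (q.1^2 + q.2^2)) p
      = (π/2) * ∫ r in Ioo (0:ℝ) R, r * g (r^2) := by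
  rw [← integral_comp_polarCoord_symm]
  have key : ∀ p ∈ polarCoord.target,
      p.1 • (D R).indicator (fun q => g (q.1^2 + q.2^2)) (polarCoord.symm p)
        = (Ioo (0:ℝ) R ×ˢ Ioo (0:ℝ) (π/2)).indicator (fun q => q.1 * g (q.1^2)) p := by
    rintro ⟨r, θ⟩ ⟨hr, hθ⟩
    simp only [mem_Ioi] at hr
    simp only [mem_Ioo] at hθ
    have hsq : (r * Real.cos θ)^2 + (r * Real.sin θ)^2 = r^2 := by
      have := Real.sin_sq_add_cos_sq θ; nlinarith
    have hmem : polarCoord.symm (r, θ) ∈ D R ↔ (r, θ) ∈ Ioo (0:ℝ) R ×ˢ Ioo (0:ℝ) (π/2) := by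
      simp only [polarCoord_symm_apply, D, mem_setOf_eq, hsq, mem_prod, mem_Ioo]
      constructor
      · rintro ⟨h1, h2, h3⟩
        have hcos : 0 < Real.cos θ := by
          by_contra hc
          push_neg at hc
          nlinarith
        have hsin : 0 < Real.sin θ := by
          by_contra hc
          push_neg at hc
          nlinarith
        have hθ0 : 0 < θ := by
          by_contra hc
          push_neg at hc
          have : 0 ≤ Real.sin (-θ) :=
            Real.sin_nonneg_of_nonneg_of_le_pi (by linarith) (by linarith [hθ.1])
          rw [Real.sin_neg] at this
          linarith
        have hθ2 : θ < π / 2 := by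
          by_contra hc
          push_neg at hc
          have : Real.cos θ ≤ 0 :=
            Real.cos_nonpos_of_pi_div_two_le_of_le hc (by linarith [hθ.2, Real.pi_pos])
          linarith
        exact ⟨⟨hr, by nlinarith⟩, hθ0, hθ2⟩
      · rintro ⟨⟨hr0, hrR⟩, hθ0, hθπ⟩
        have hcos : 0 < Real.cos θ := Real.cos_pos_of_mem_Ioo ⟨by linarith [Real.pi_pos], by linarith⟩
        have hsin : 0 < Real.sin θ := Real.sin_pos_of_pos_of_lt_pi hθ0 (by linarith [Real.pi_pos])
        exact ⟨by positivity, by positivity, by nlinarith⟩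
    classical
    rw [Set.indicator_apply, Set.indicator_apply, hmem]
    by_cases h : (r, θ) ∈ Ioo (0:ℝ) R ×ˢ Ioo (0:ℝ) (π/2) <;>
      simp [h, polarCoord_symm_apply, hsq, smul_eq_mul]
  rw [setIntegral_congr_fun polarCoord.open_target.measurableSet key]
  rw [setIntegral_indicator ((measurableSet_Ioo).prod measurableSet_Ioo)]
  have hsub : (Ioo (0:ℝ) R ×ˢ Ioo (0:ℝ) (π/2)) ⊆ polarCoord.target := by
    rw [polarCoord_target]
    rintro ⟨r, θ⟩ ⟨h1, h2⟩
    exact ⟨h1.1, by constructor <;> [linarith [h2.1, Real.pi_pos]; linarith [h2.2, Real.pi_pos]]⟩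
  rw [Set.inter_eq_self_of_subset_right hsub]
  rw [Measure.volume_eq_prod]
  rw [show (fun p : ℝ × ℝ => p.1 * g (p.1^2)) = fun p : ℝ × ℝ =>
    (fun r => r * g (r^2)) p.1 * (fun _ : ℝ => (1:ℝ)) p.2 from funext fun p => by simp]
  rw [setIntegral_prod_mul (fun r : ℝ => r * g (r^2)) (fun _ : ℝ => (1:ℝ))]
  rw [setIntegral_const, measureReal_def, Real.volume_Ioo, smul_eq_mul, mul_one]
  rw [ENNReal.toReal_ofReal (by simp; positivity)]
  ring

lemma int_r_exp (R : ℝ) (hR : 0 ≤ R) :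
    ∫ r in Ioo (0:ℝ) R, r * Real.exp (-r^2) = (1 - Real.exp (-R^2)) / 2 := by
  rw [← MeasureTheory.integral_Ioc_eq_integral_Ioo, ← intervalIntegral.integral_of_le hR]
  have hderiv : ∀ x ∈ Set.uIcc (0:ℝ) R,
      HasDerivAt (fun r : ℝ => -Real.exp (-r^2) / 2) (x * Real.exp (-x^2)) x := by
    intro x _
    have h1 : HasDerivAt (fun r : ℝ => -r^2) (-(2*x)) x := by
      simpa using (hasDerivAt_pow 2 x).fun_neg
    have h2 := (h1.exp).fun_neg.div_const 2
    convert h2 using 1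
    · rfl
    · rfl
    · ring
  rw [intervalIntegral.integral_eq_sub_of_hasDerivAt hderiv (by
    apply Continuous.intervalIntegrable; fun_prop)]
  simp [Real.exp_zero]
  ring

lemma int_r (R : ℝ) (hR : 0 ≤ R) : ∫ r in Ioo (0:ℝ) R, r = R^2 / 2 := by
  rw [← MeasureTheory.integral_Ioc_eq_integral_Ioo, ← intervalIntegral.integral_of_le hR]
  simpa using integral_id (a := 0) (b := R)

lemma integral_D (R : ℝ) (hR : 0 < R) :
    ∫ p in D R, Real.exp (-(p.1^2 + p.2^2)) = π/4 * (1 - Real.exp (-R^2)) := by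
  rw [← MeasureTheory.integral_indicator (measurableSet_D R)]
  have := polar_comp R hR (fun s => Real.exp (-s))
  rw [this, int_r_exp R hR.le]
  ring

lemma volume_D_ne_top (R : ℝ) (hR : 0 < R) : volume (D R) ≠ ⊤ := by
  have hsub : D R ⊆ Ioo 0 R ×ˢ Ioo 0 R := by
    rintro ⟨x, y⟩ ⟨hx, hy, hxy⟩
    dsimp only at hx hy hxy
    exact ⟨⟨hx, by nlinarith⟩, hy, by nlinarith⟩
  refine ne_top_of_le_ne_top ?_ (measure_mono hsub)
  rw [Measure.volume_eq_prod, Measure.prod_prod, Real.volume_Ioo]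
  exact ENNReal.mul_ne_top ENNReal.ofReal_ne_top ENNReal.ofReal_ne_top

lemma volume_D (R : ℝ) (hR : 0 < R) : volume (D R) = ENNReal.ofReal (π/4 * R^2) := by
  have h := polar_comp R hR (fun _ => (1:ℝ))
  simp only [mul_one] at h
  rw [int_r R hR.le] at h
  have hconst : (∫ p : ℝ × ℝ, (D R).indicator (fun _ => (1:ℝ)) p)
      = (volume (D R)).toReal := by
    rw [MeasureTheory.integral_indicator_const (1:ℝ) (measurableSet_D R)]
    simp [measureReal_def]
  have : (volume (D R)).toReal = π/2 * (R^2/2) := by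
    rw [← hconst, ← h]
  rw [← ENNReal.ofReal_toReal (volume_D_ne_top R hR), this]
  congr 1
  ring

end ErfAux

theorem erf_le_sqrt_one_sub_exp (t : ℝ) (ht : 0 ≤ t) :
    erf t ≤ Real.sqrt (1 - Real.exp (-4 * t^2 / π)) := by
  have hπ := Real.pi_pos
  rcases ht.eq_or_lt with rfl | ht0
  · simp [erf]
  set R : ℝ := 2 * t / Real.sqrt π with hRdef
  have hsπ : 0 < Real.sqrt π := Real.sqrt_pos.2 hπ
  have hR : 0 < R := by positivity
  have hR2 : R^2 = 4 * t^2 / π := by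
    rw [hRdef, div_pow, Real.sq_sqrt hπ.le]; ring
  set f : ℝ × ℝ → ℝ := fun p => Real.exp (-(p.1^2 + p.2^2)) with hfdef
  set I : ℝ := ∫ z in (0:ℝ)..t, Real.exp (-z^2) with hIdef
  have hI0 : 0 ≤ I := intervalIntegral.integral_nonneg ht (fun x _ => (Real.exp_pos _).le)
  have hexp1 : Real.exp (-4 * t^2 / π) ≤ 1 := by
    rw [Real.exp_le_one_iff, neg_mul, neg_div]
    have : 0 ≤ 4 * t^2 / π := by positivity
    linarith
  -- integrability
  have h1int : Integrable (fun x : ℝ => Real.exp (-x^2)) := by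
    simpa using integrable_exp_neg_mul_sq (one_pos)
  have hfInt : Integrable f := by
    have h := h1int.mul_prod h1int
    have heq : (fun z : ℝ × ℝ => Real.exp (-z.1^2) * Real.exp (-z.2^2)) = f := by
      funext p
      rw [hfdef, ← Real.exp_add]
      ring_nf
    rw [heq] at h
    rwa [← Measure.volume_eq_prod] at h
  set S : Set (ℝ × ℝ) := Ioc 0 t ×ˢ Ioc 0 t with hSdef
  have hSmeas : MeasurableSet S := measurableSet_Ioc.prod measurableSet_Ioc
  have hSint : ∫ p in S, f p = I^2 := by
    have heq : f = fun p : ℝ × ℝ =>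
        (fun x => Real.exp (-x^2)) p.1 * (fun y => Real.exp (-y^2)) p.2 := by
      funext p
      rw [hfdef, ← Real.exp_add]
      ring_nf
    rw [heq, Measure.volume_eq_prod,
      setIntegral_prod_mul (fun x : ℝ => Real.exp (-x^2)) (fun y : ℝ => Real.exp (-y^2))]
    rw [hIdef, intervalIntegral.integral_of_le ht]
    ring
  have hDmeas := ErfAux.measurableSet_D R
  have hvolS : volume S = ENNReal.ofReal (t^2) := by
    rw [hSdef, Measure.volume_eq_prod, Measure.prod_prod, Real.volume_Ioc, sub_zero,
      ← ENNReal.ofReal_mul ht, sq]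
  have hvolD : volume (ErfAux.D R) = ENNReal.ofReal (t^2) := by
    rw [ErfAux.volume_D R hR, hR2]
    congr 1
    field_simp
  have hfinS : volume S ≠ ⊤ := by rw [hvolS]; exact ENNReal.ofReal_ne_top
  have hfinD : volume (ErfAux.D R) ≠ ⊤ := ErfAux.volume_D_ne_top R hR
  have hfinSD : volume (S ∩ ErfAux.D R) ≠ ⊤ :=
    ne_top_of_le_ne_top hfinS (measure_mono Set.inter_subset_left)
  have hfinDS : volume (ErfAux.D R ∩ S) ≠ ⊤ :=
    ne_top_of_le_ne_top hfinD (measure_mono Set.inter_subset_left)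
  have hdiff : volume (S \ ErfAux.D R) = volume (ErfAux.D R \ S) := by
    rw [← Set.diff_self_inter (s := S) (t := ErfAux.D R), ← Set.diff_self_inter (s := ErfAux.D R) (t := S)]
    rw [measure_diff Set.inter_subset_left (hSmeas.inter hDmeas).nullMeasurableSet hfinSD,
      measure_diff Set.inter_subset_left (hDmeas.inter hSmeas).nullMeasurableSet hfinDS]
    rw [hvolS, hvolD, Set.inter_comm]
  -- pointwise bounds
  have hub : ∀ p ∈ S \ ErfAux.D R, f p ≤ Real.exp (-R^2) := by
    rintro ⟨x, y⟩ ⟨hS, hD⟩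
    simp only [hSdef, Set.mem_prod, Set.mem_Ioc] at hS
    have hge : R^2 ≤ x^2 + y^2 := by
      by_contra hc
      push_neg at hc
      exact hD ⟨hS.1.1, hS.2.1, hc⟩
    exact Real.exp_le_exp.2 (by dsimp only; linarith)
  have hlb : ∀ p ∈ ErfAux.D R \ S, Real.exp (-R^2) ≤ f p := by
    rintro ⟨x, y⟩ ⟨hD, _⟩
    obtain ⟨-, -, hxy⟩ := hD
    exact Real.exp_le_exp.2 (by dsimp only at hxy ⊢; linarith)
  have split1 : (∫ p in S ∩ ErfAux.D R, f p) + ∫ p in S \ ErfAux.D R, f p = ∫ p in S, f p :=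
    integral_inter_add_diff hDmeas (hfInt.integrableOn (s := S))
  have split2 : (∫ p in ErfAux.D R ∩ S, f p) + ∫ p in ErfAux.D R \ S, f p = ∫ p in ErfAux.D R, f p :=
    integral_inter_add_diff hSmeas (hfInt.integrableOn (s := ErfAux.D R))
  have hup : ∫ p in S \ ErfAux.D R, f p ≤ Real.exp (-R^2) * (volume (S \ ErfAux.D R)).toReal := by
    calc ∫ p in S \ ErfAux.D R, f p ≤ ∫ _p in S \ ErfAux.D R, Real.exp (-R^2) :=
          setIntegral_mono_on hfInt.integrableOn
            (integrableOn_const (lt_of_le_of_lt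
              (measure_mono Set.diff_subset) hfinS.lt_top).ne)
            (hSmeas.diff hDmeas) hub
      _ = Real.exp (-R^2) * (volume (S \ ErfAux.D R)).toReal := by
          rw [setIntegral_const, smul_eq_mul, mul_comm, measureReal_def]
  have hlo : Real.exp (-R^2) * (volume (ErfAux.D R \ S)).toReal ≤ ∫ p in ErfAux.D R \ S, f p := by
    calc Real.exp (-R^2) * (volume (ErfAux.D R \ S)).toReal
        = ∫ _p in ErfAux.D R \ S, Real.exp (-R^2) := by
          rw [setIntegral_const, smul_eq_mul, mul_comm, measureReal_def]
      _ ≤ ∫ p in ErfAux.D R \ S, f p :=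
          setIntegral_mono_on
            (integrableOn_const (lt_of_le_of_lt
              (measure_mono Set.diff_subset) hfinD.lt_top).ne)
            hfInt.integrableOn (hDmeas.diff hSmeas) hlb
  have hinters : ∫ p in S ∩ ErfAux.D R, f p = ∫ p in ErfAux.D R ∩ S, f p := by rw [Set.inter_comm]
  have hDint : ∫ p in ErfAux.D R, f p = π/4 * (1 - Real.exp (-R^2)) := ErfAux.integral_D R hR
  have htoReal : (volume (S \ ErfAux.D R)).toReal = (volume (ErfAux.D R \ S)).toReal := by rw [hdiff]
  have key : I^2 ≤ π/4 * (1 - Real.exp (-R^2)) := by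
    rw [← hSint, ← hDint]
    rw [← split1, ← split2]
    rw [htoReal] at hup
    exact add_le_add (le_of_eq hinters) (le_trans hup hlo)
  have hY : 0 ≤ 1 - Real.exp (-4 * t^2 / π) := by linarith
  have herf : erf t = 2 / Real.sqrt π * I := rfl
  rw [herf, Real.le_sqrt (mul_nonneg (by positivity) hI0) hY]
  have hRe : -R^2 = -4 * t^2 / π := by rw [hR2]; ring
  calc (2 / Real.sqrt π * I)^2 = 4/π * I^2 := by
        rw [mul_pow, div_pow, Real.sq_sqrt hπ.le]
        norm_num
    _ ≤ 4/π * (π/4 * (1 - Real.exp (-R^2))) := by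
        have h4 : (0:ℝ) ≤ 4/π := by positivity
        exact mul_le_mul_of_nonneg_left key h4
    _ = 1 - Real.exp (-R^2) := by field_simp
    _ = 1 - Real.exp (-4 * t^2 / π) := by rw [hRe]
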